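/- Let A be a unital C*-algebra, γ > 0, and f ∈ C([0,1]). Then there exists δ > 0 such that for all positive contractions a, b ∈ A and every tracial state τ on A with ‖a − b‖_{2,τ} < δ, one has ‖f(a) − f(b)‖_{2,τ} < γ. -/

import Mathlib

noncomputable section

variable {A : Type*} [CStarAlgebra A] [PartialOrder A] [StarOrderedRing A]

/-- A tracial state on a unital C*-algebra. -/
def IsTracialState (τ : A →ₗ[ℂ] ℂ) : Prop :=
  τ 1 = 1 ∧ (∀ a : A, 0 ≤ (τ (star a * a)).re ∧ (τ (star a * a)).im = 0) ∧
    ∀ a b : A, τ (a * b) = τ (b * a)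

/-- The 2-seminorm `‖a‖_{2,τ} = τ(a*a)^{1/2}`. -/
def trNorm (τ : A →ₗ[ℂ] ℂ) (a : A) : ℝ := Real.sqrt ((τ (star a * a)).re)

namespace TrAux

variable {τ : A →ₗ[ℂ] ℂ}

lemma tr_nonneg (hτ : IsTracialState τ) {x : A} (hx : 0 ≤ x) :
    0 ≤ (τ x).re ∧ (τ x).im = 0 := by
  have h1 : CFC.sqrt x * CFC.sqrt x = x := CFC.sqrt_mul_sqrt_self x hx
  have h2 : IsSelfAdjoint (CFC.sqrt x) := IsSelfAdjoint.of_nonneg (CFC.sqrt_nonneg x)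
  have := hτ.2.1 (CFC.sqrt x)
  rwa [h2.star_eq, h1] at this

lemma tr_real (hτ : IsTracialState τ) {x : A} (hx : IsSelfAdjoint x) : (τ x).im = 0 := by
  have h := CFC.posPart_sub_negPart x hx
  have h1 := (tr_nonneg hτ (CFC.posPart_nonneg x)).2
  have h2 := (tr_nonneg hτ (CFC.negPart_nonneg x)).2
  calc (τ x).im = (τ (x⁺ - x⁻)).im := by rw [h]
    _ = 0 := by rw [map_sub]; simp [Complex.sub_im, h1, h2]

lemma tr_star (hτ : IsTracialState τ) (x : A) : τ (star x) = starRingEnd ℂ (τ x) := by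
  have h1 : IsSelfAdjoint (x + star x) := by
    rw [IsSelfAdjoint]; simp [star_add, add_comm]
  have h2 : IsSelfAdjoint ((Complex.I : ℂ) • (x - star x)) := by
    have hI : star (Complex.I) = -Complex.I := by
      simpa using Complex.conj_I
    rw [IsSelfAdjoint, star_smul, star_sub, star_star, hI, neg_smul, smul_sub, neg_sub]
    rw [smul_sub]
  have e1 := tr_real hτ h1
  have e2 := tr_real hτ h2
  rw [map_add] at e1
  rw [map_smul, map_sub] at e2
  apply Complex.ext
  · simp only [Complex.add_im] at e1
    simp only [smul_eq_mul, Complex.mul_im, Complex.smul_re, Complex.smul_im] at e2 ⊢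
    simp only [smul_eq_mul, Complex.mul_im, Complex.I_re, Complex.I_im, Complex.sub_re,
      Complex.sub_im] at e2
    simp only [Complex.conj_re]
    linarith
  · simp only [Complex.add_im] at e1
    simp only [Complex.conj_im]
    linarith

lemma tr_mono (hτ : IsTracialState τ) {x y : A} (h : x ≤ y) : (τ x).re ≤ (τ y).re := by
  have := (tr_nonneg hτ (sub_nonneg.mpr h)).1
  rw [map_sub] at this
  simpa [Complex.sub_re] using this

lemma tr_smul (c : ℝ) (z : A) : (τ (c • z)).re = c * (τ z).re := by
  rw [← algebraMap_smul ℂ c z, map_smul]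
  simp [Complex.smul_re]

lemma tr_algebraMap (hτ : IsTracialState τ) (c : ℝ) :
    (τ (algebraMap ℝ A c)).re = c := by
  rw [Algebra.algebraMap_eq_smul_one, tr_smul, hτ.1]
  simp

lemma tr_le_norm (hτ : IsTracialState τ) {x : A} (hx : 0 ≤ x) : (τ x).re ≤ ‖x‖ := by
  have h := IsSelfAdjoint.le_algebraMap_norm_self (IsSelfAdjoint.of_nonneg hx)
  simpa [tr_algebraMap hτ] using tr_mono hτ h

lemma trNorm_nonneg (τ : A →ₗ[ℂ] ℂ) (x : A) : 0 ≤ trNorm τ x := Real.sqrt_nonneg _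

lemma trNorm_sq (hτ : IsTracialState τ) (x : A) :
    trNorm τ x ^ 2 = (τ (star x * x)).re := by
  rw [trNorm, Real.sq_sqrt (hτ.2.1 x).1]

@[simp] lemma trNorm_zero (τ : A →ₗ[ℂ] ℂ) : trNorm τ (0 : A) = 0 := by
  simp [trNorm]

lemma trNorm_neg (τ : A →ₗ[ℂ] ℂ) (x : A) : trNorm τ (-x) = trNorm τ x := by
  simp [trNorm]

lemma trNorm_le_of_sq_le (hτ : IsTracialState τ) {x : A} {c : ℝ} (hc : 0 ≤ c)
    (h : (τ (star x * x)).re ≤ c ^ 2) : trNorm τ x ≤ c := by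
  rw [trNorm]
  calc Real.sqrt ((τ (star x * x)).re) ≤ Real.sqrt (c ^ 2) := Real.sqrt_le_sqrt h
    _ = c := Real.sqrt_sq hc

lemma trNorm_le_norm (hτ : IsTracialState τ) (x : A) : trNorm τ x ≤ ‖x‖ := by
  refine trNorm_le_of_sq_le hτ (norm_nonneg x) ?_
  calc (τ (star x * x)).re ≤ ‖star x * x‖ := tr_le_norm hτ (star_mul_self_nonneg x)
    _ = ‖x‖ ^ 2 := by rw [CStarRing.norm_star_mul_self, pow_two]

lemma trNorm_smul (hτ : IsTracialState τ) (c : ℝ) (x : A) :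
    trNorm τ (c • x) = |c| * trNorm τ x := by
  have : star (c • x) * (c • x) = (c * c) • (star x * x) := by
    rw [star_smul, smul_mul_smul_comm]
    simp
  rw [trNorm, trNorm, this, tr_smul, show c * c = |c| ^ 2 by rw [sq_abs, sq],
    Real.sqrt_mul (sq_nonneg _), Real.sqrt_sq (abs_nonneg c)]

lemma trNorm_mul_le_left (hτ : IsTracialState τ) (x y : A) :
    trNorm τ (x * y) ≤ ‖x‖ * trNorm τ y := by
  refine trNorm_le_of_sq_le hτ (mul_nonneg (norm_nonneg x) (trNorm_nonneg τ y)) ?_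
  have h1 : star (x * y) * (x * y) = star y * (star x * x) * y := by
    rw [star_mul]; noncomm_ring
  have h2 : star y * (star x * x) * y ≤ star y * algebraMap ℝ A (‖x‖ ^ 2) * y :=
    star_left_conjugate_le_conjugate CStarAlgebra.star_mul_le_algebraMap_norm_sq y
  have h3 : star y * algebraMap ℝ A (‖x‖ ^ 2) * y = (‖x‖ ^ 2) • (star y * y) := by
    rw [Algebra.algebraMap_eq_smul_one, mul_smul_comm, mul_one, smul_mul_assoc]
  calc (τ (star (x * y) * (x * y))).re ≤ (τ ((‖x‖ ^ 2) • (star y * y))).re := by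
        rw [h1, ← h3]; exact tr_mono hτ h2
    _ = ‖x‖ ^ 2 * (τ (star y * y)).re := tr_smul _ _
    _ = (‖x‖ * trNorm τ y) ^ 2 := by rw [mul_pow, trNorm_sq hτ]

lemma trNorm_mul_le_right (hτ : IsTracialState τ) (x y : A) :
    trNorm τ (x * y) ≤ trNorm τ x * ‖y‖ := by
  refine trNorm_le_of_sq_le hτ (mul_nonneg (trNorm_nonneg τ x) (norm_nonneg y)) ?_
  have h0 : τ (star (x * y) * (x * y)) = τ ((x * y) * star (x * y)) := hτ.2.2 _ _
  have h1 : (x * y) * star (x * y) = x * (y * star y) * star x := by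
    rw [star_mul]; noncomm_ring
  have h2 : x * (y * star y) * star x ≤ x * algebraMap ℝ A (‖y‖ ^ 2) * star x :=
    star_right_conjugate_le_conjugate CStarAlgebra.mul_star_le_algebraMap_norm_sq x
  have h3 : x * algebraMap ℝ A (‖y‖ ^ 2) * star x = (‖y‖ ^ 2) • (x * star x) := by
    rw [Algebra.algebraMap_eq_smul_one, mul_smul_comm, mul_one, smul_mul_assoc]
  calc (τ (star (x * y) * (x * y))).re
      = (τ (x * (y * star y) * star x)).re := by rw [h0, h1]
    _ ≤ (τ ((‖y‖ ^ 2) • (x * star x))).re := by rw [← h3]; exact tr_mono hτ h2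
    _ = ‖y‖ ^ 2 * (τ (x * star x)).re := tr_smul _ _
    _ = ‖y‖ ^ 2 * (τ (star x * x)).re := by rw [hτ.2.2]
    _ = (trNorm τ x * ‖y‖) ^ 2 := by rw [mul_pow, trNorm_sq hτ]; ring

lemma tr_re_star_mul (hτ : IsTracialState τ) (x y : A) :
    (τ (star y * x)).re = (τ (star x * y)).re := by
  have : star y * x = star (star x * y) := by simp [star_mul]
  rw [this, tr_star hτ, Complex.conj_re]

lemma expand_sub_smul (t : ℝ) (x y : A) :
    star (x - t • y) * (x - t • y) =
      star x * x - t • (star x * y) - t • (star y * x) + (t * t) • (star y * y) := by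
  rw [star_sub, star_smul, show (star t : ℝ) = t from rfl]
  simp only [sub_mul, mul_sub, smul_mul_assoc, mul_smul_comm, smul_sub, smul_smul]
  abel

lemma tr_cauchy_schwarz (hτ : IsTracialState τ) (x y : A) :
    (τ (star x * y)).re ≤ trNorm τ x * trNorm τ y := by
  set R := (τ (star x * y)).re with hR
  set Nx := trNorm τ x
  set Ny := trNorm τ y
  have hNx : 0 ≤ Nx := trNorm_nonneg τ x
  have hNy : 0 ≤ Ny := trNorm_nonneg τ y
  have key : ∀ t : ℝ, 0 ≤ Ny ^ 2 * (t * t) + (-(2 * R)) * t + Nx ^ 2 := by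
    intro t
    have h := (hτ.2.1 (x - t • y)).1
    rw [expand_sub_smul] at h
    rw [map_add, map_sub, map_sub] at h
    simp only [Complex.add_re, Complex.sub_re, tr_smul] at h
    rw [tr_re_star_mul hτ x y] at h
    rw [trNorm_sq hτ, trNorm_sq hτ]
    linarith
  have hd := discrim_le_zero key
  rw [discrim] at hd
  have hsq : R ^ 2 ≤ (Nx * Ny) ^ 2 := by nlinarith
  calc R ≤ |R| := le_abs_self R
    _ = Real.sqrt (R ^ 2) := (Real.sqrt_sq_eq_abs R).symm
    _ ≤ Real.sqrt ((Nx * Ny) ^ 2) := Real.sqrt_le_sqrt hsq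
    _ = Nx * Ny := Real.sqrt_sq (mul_nonneg hNx hNy)

lemma trNorm_add_le (hτ : IsTracialState τ) (x y : A) :
    trNorm τ (x + y) ≤ trNorm τ x + trNorm τ y := by
  refine trNorm_le_of_sq_le hτ (add_nonneg (trNorm_nonneg τ x) (trNorm_nonneg τ y)) ?_
  have hexp : star (x + y) * (x + y) =
      star x * x + star x * y + star y * x + star y * y := by
    rw [star_add]
    simp only [add_mul, mul_add]
    abel
  rw [hexp, map_add, map_add, map_add]
  simp only [Complex.add_re]
  have h1 := tr_cauchy_schwarz hτ x y
  have h2 := tr_re_star_mul hτ x y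
  have hx2 := trNorm_sq hτ x
  have hy2 := trNorm_sq hτ y
  nlinarith [trNorm_nonneg τ x, trNorm_nonneg τ y]

lemma trNorm_sub_le (hτ : IsTracialState τ) (u v w : A) :
    trNorm τ (u - w) ≤ trNorm τ (u - v) + trNorm τ (v - w) := by
  have : u - w = (u - v) + (v - w) := by abel
  rw [this]
  exact trNorm_add_le hτ _ _

omit [PartialOrder A] [StarOrderedRing A] in
lemma norm_pow_le_one {b : A} (hb : ‖b‖ ≤ 1) (n : ℕ) : ‖b ^ n‖ ≤ 1 := by
  induction n with
  | zero =>
    rw [pow_zero]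
    rcases subsingleton_or_nontrivial A with h | h
    · simp [Subsingleton.elim (1 : A) 0]
    · exact (CStarRing.norm_one (E := A)).le
  | succ n ih =>
    rw [pow_succ]
    calc ‖b ^ n * b‖ ≤ ‖b ^ n‖ * ‖b‖ := norm_mul_le _ _
      _ ≤ 1 * 1 := mul_le_mul ih hb (norm_nonneg b) zero_le_one
      _ = 1 := mul_one 1

lemma trNorm_pow_sub_pow (hτ : IsTracialState τ) {a b : A}
    (ha1 : ‖a‖ ≤ 1) (hb1 : ‖b‖ ≤ 1) (n : ℕ) :
    trNorm τ (a ^ n - b ^ n) ≤ n * trNorm τ (a - b) := by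
  induction n with
  | zero => simp
  | succ n ih =>
    have key : a ^ (n + 1) - b ^ (n + 1) = a * (a ^ n - b ^ n) + (a - b) * b ^ n := by
      simp only [pow_succ']
      noncomm_ring
    set t := trNorm τ (a - b) with ht
    have htn : 0 ≤ t := trNorm_nonneg τ _
    calc trNorm τ (a ^ (n + 1) - b ^ (n + 1))
        = trNorm τ (a * (a ^ n - b ^ n) + (a - b) * b ^ n) := by rw [key]
      _ ≤ trNorm τ (a * (a ^ n - b ^ n)) + trNorm τ ((a - b) * b ^ n) :=
          trNorm_add_le hτ _ _
      _ ≤ ‖a‖ * trNorm τ (a ^ n - b ^ n) + trNorm τ (a - b) * ‖b ^ n‖ :=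
          add_le_add (trNorm_mul_le_left hτ _ _) (trNorm_mul_le_right hτ _ _)
      _ ≤ 1 * (n * t) + t * 1 := by
          refine add_le_add ?_ ?_
          · exact mul_le_mul ha1 ih (trNorm_nonneg τ _) zero_le_one
          · exact mul_le_mul_of_nonneg_left (norm_pow_le_one hb1 n) htn
      _ = (n + 1 : ℕ) * t := by push_cast; ring

lemma trNorm_sum_le (hτ : IsTracialState τ) {ι : Type*} (s : Finset ι) (g : ι → A) :
    trNorm τ (∑ i ∈ s, g i) ≤ ∑ i ∈ s, trNorm τ (g i) := by
  classical
  induction s using Finset.induction_on with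
  | empty => simp
  | insert _ _ hi ih =>
    rw [Finset.sum_insert hi, Finset.sum_insert hi]
    exact (trNorm_add_le hτ _ _).trans (add_le_add_right ih _)

open Polynomial in
lemma trNorm_aeval_sub (hτ : IsTracialState τ) {a b : A}
    (ha1 : ‖a‖ ≤ 1) (hb1 : ‖b‖ ≤ 1) (p : ℝ[X]) :
    trNorm τ (aeval a p - aeval b p) ≤
      (∑ i ∈ Finset.range (p.natDegree + 1), |p.coeff i| * i) * trNorm τ (a - b) := by
  set t := trNorm τ (a - b) with ht
  have htn : 0 ≤ t := trNorm_nonneg τ _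
  rw [aeval_eq_sum_range, aeval_eq_sum_range, ← Finset.sum_sub_distrib]
  calc trNorm τ (∑ i ∈ Finset.range (p.natDegree + 1), (p.coeff i • a ^ i - p.coeff i • b ^ i))
      ≤ ∑ i ∈ Finset.range (p.natDegree + 1), trNorm τ (p.coeff i • a ^ i - p.coeff i • b ^ i) :=
        trNorm_sum_le hτ _ _
    _ ≤ ∑ i ∈ Finset.range (p.natDegree + 1), |p.coeff i| * i * t := by
        refine Finset.sum_le_sum fun i _ => ?_
        rw [← smul_sub, trNorm_smul hτ, mul_assoc]
        exact mul_le_mul_of_nonneg_left (trNorm_pow_sub_pow hτ ha1 hb1 i) (abs_nonneg _)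
    _ = (∑ i ∈ Finset.range (p.natDegree + 1), |p.coeff i| * i) * t := by
        rw [Finset.sum_mul]

end TrAux

open TrAux

/-- Lemma 4.1(1): for `γ > 0` and `f ∈ C([0,1])` there is `δ > 0` such
that for all positive contractions `a, b` and every tracial state `τ` with
`‖a − b‖_{2,τ} < δ`, one has `‖f(a) − f(b)‖_{2,τ} < γ`. -/
theorem trNorm_cfc_continuity (γ : ℝ) (hγ : 0 < γ)
    (f : ℝ → ℝ) (hf : ContinuousOn f (Set.Icc (0 : ℝ) 1)) :
    ∃ δ > (0 : ℝ), ∀ a b : A, 0 ≤ a → 0 ≤ b → ‖a‖ ≤ 1 → ‖b‖ ≤ 1 →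
      ∀ τ : A →ₗ[ℂ] ℂ, IsTracialState τ → trNorm τ (a - b) < δ →
        trNorm τ (cfc f a - cfc f b) < γ := by
  rcases subsingleton_or_nontrivial A with hA | hA
  · refine ⟨1, one_pos, ?_⟩
    intro a b _ _ _ _ τ _ _
    have : cfc f a - cfc f b = 0 := Subsingleton.elim _ _
    rw [this]
    simpa using hγ
  obtain ⟨p, hp⟩ := exists_polynomial_near_of_continuousOn 0 1 f hf (γ / 4) (by linarith)
  set M : ℝ := ∑ i ∈ Finset.range (p.natDegree + 1), |p.coeff i| * i with hM
  have hM0 : 0 ≤ M :=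
    Finset.sum_nonneg fun i _ => mul_nonneg (abs_nonneg _) (Nat.cast_nonneg i)
  refine ⟨γ / (2 * (M + 1)), by positivity, ?_⟩
  intro a b ha hb ha1 hb1 τ hτ hab
  have spec_sub : ∀ c : A, 0 ≤ c → ‖c‖ ≤ 1 → spectrum ℝ c ⊆ Set.Icc (0 : ℝ) 1 := by
    intro c hc hc1 x hx
    exact ⟨spectrum_nonneg_of_nonneg hc hx,
      (Real.le_norm_self x).trans ((spectrum.norm_le_norm_of_mem hx).trans hc1)⟩
  have end_est : ∀ c : A, 0 ≤ c → ‖c‖ ≤ 1 →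
      trNorm τ (cfc f c - Polynomial.aeval c p) ≤ γ / 4 := by
    intro c hc hc1
    have hsc : IsSelfAdjoint c := .of_nonneg hc
    have hspc := spec_sub c hc hc1
    have hfc : ContinuousOn f (spectrum ℝ c) := hf.mono hspc
    have hpc : ContinuousOn (fun x => p.eval x) (spectrum ℝ c) :=
      p.continuous.continuousOn
    have h1 : cfc f c - Polynomial.aeval c p = cfc (fun x => f x - p.eval x) c := by
      rw [cfc_sub f (fun x => p.eval x) c hfc hpc, cfc_polynomial p c]
    rw [h1]
    refine (trNorm_le_norm hτ _).trans ?_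
    refine norm_cfc_le (by linarith) fun x hx => ?_
    have := hp x (hspc hx)
    rw [Real.norm_eq_abs, abs_sub_comm]
    exact this.le
  have mid : trNorm τ (Polynomial.aeval a p - Polynomial.aeval b p) < γ / 2 := by
    have h1 := trNorm_aeval_sub hτ ha1 hb1 p
    have ht0 : 0 ≤ trNorm τ (a - b) := trNorm_nonneg τ _
    have h2 : M * trNorm τ (a - b) ≤ (M + 1) * trNorm τ (a - b) := by nlinarith
    have h3 : (M + 1) * trNorm τ (a - b) < (M + 1) * (γ / (2 * (M + 1))) :=
      mul_lt_mul_of_pos_left hab (by linarith)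
    have h4 : (M + 1) * (γ / (2 * (M + 1))) = γ / 2 := by
      field_simp
    calc trNorm τ (Polynomial.aeval a p - Polynomial.aeval b p)
        ≤ M * trNorm τ (a - b) := h1
      _ < γ / 2 := by rw [← h4]; exact lt_of_le_of_lt h2 h3
  have e1 := end_est a ha ha1
  have e2 := end_est b hb hb1
  have tri1 := trNorm_sub_le hτ (cfc f a) (Polynomial.aeval a p) (cfc f b)
  have tri2 := trNorm_sub_le hτ (Polynomial.aeval a p) (Polynomial.aeval b p) (cfc f b)
  have e2' : trNorm τ (Polynomial.aeval b p - cfc f b) ≤ γ / 4 := by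
    rw [show Polynomial.aeval b p - cfc f b = -(cfc f b - Polynomial.aeval b p) by abel,
      trNorm_neg]
    exact e2
  linarith
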